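/- (Lemma 3.4) The kernels q_{n−j}^{(n)} are complementary to the DOC kernels θ_{n−j}^{(n)}: for all 1 ≤ k ≤ n ≤ N one has ∑_{j=k}^{n} q_{n−j}^{(n)} θ_{j−k}^{(j)} = 1. -/

import Mathlib

open Finset intervalIntegral Matrix

noncomputable def omegaK (μ s : ℝ) : ℝ := s ^ (μ - 1) / Real.Gamma μ

noncomputable def qK (α : ℝ) (t : ℕ → ℝ) (n k : ℕ) : ℝ :=
  ∫ s in (t (k - 1))..(t k), omegaK α (t n - s)

noncomputable def aK (α : ℝ) (t : ℕ → ℝ) (n k : ℕ) : ℝ :=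
  if k = n then qK α t n n else qK α t n k - qK α t (n - 1) k

noncomputable def thetaAux (A : ℕ → ℕ → ℝ) (n : ℕ) : ℕ → ℕ → ℝ
  | 0, m => if m = 0 then 1 / A n n else 0
  | M + 1, m =>
      if m ≤ M then thetaAux A n M m
      else -(1 / A (n - (M + 1)) (n - (M + 1))) *
        ∑ ℓ ∈ Finset.range (M + 1), thetaAux A n M ℓ * A (n - ℓ) (n - (M + 1))

noncomputable def thetaK (α : ℝ) (t : ℕ → ℝ) (n k : ℕ) : ℝ :=
  thetaAux (aK α t) n (n - k) (n - k)

noncomputable def Hfun (a b : ℝ) : ℝ := a ^ 3 / 3 + a * b ^ 2 / 2 + b ^ 3 / 6 - (a + b) / 2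

noncomputable def Ffun (u : ℝ) : ℝ := (1 - u ^ 2) ^ 2 / 4

noncomputable def zetaK (α : ℝ) (t : ℕ → ℝ) (n j : ℕ) : ℝ :=
  if j = n then thetaK α t n n else thetaK α t n j - thetaK α t n (j + 1)

lemma thetaAux_stable (A : ℕ → ℕ → ℝ) (n : ℕ) :
    ∀ M m, m ≤ M → thetaAux A n M m = thetaAux A n m m := by
  intro M
  induction M with
  | zero => intro m hm; interval_cases m; rfl
  | succ M ih =>
    intro m hm
    rcases Nat.lt_or_ge m (M+1) with h | h
    · rw [thetaAux]; rw [if_pos (by omega)]; exact ih m (by omega)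
    · have : m = M + 1 := by omega
      subst this; rfl

noncomputable def thetaK' (A : ℕ → ℕ → ℝ) (n k : ℕ) : ℝ := thetaAux A n (n - k) (n - k)

lemma thetaK'_diag (A : ℕ → ℕ → ℝ) (k : ℕ) : thetaK' A k k = 1 / A k k := by
  simp [thetaK', thetaAux]

lemma thetaK'_rec (A : ℕ → ℕ → ℝ) (n k : ℕ) (hkn : k < n) :
    thetaK' A n k = -(1 / A k k) * ∑ i ∈ Icc (k+1) n, thetaK' A n i * A i k := by
  obtain ⟨M, hM⟩ : ∃ M, n - k = M + 1 := ⟨n - k - 1, by omega⟩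
  have hnk : n - (M + 1) = k := by omega
  rw [thetaK', hM, thetaAux, if_neg (by omega), hnk]
  congr 1
  rw [Finset.sum_nbij' (i := fun ℓ => n - ℓ) (j := fun i => n - i)]
  · intro ℓ hℓ; simp only [mem_range] at hℓ; simp only [mem_Icc]; omega
  · intro i hi; simp only [mem_Icc] at hi; simp only [mem_range]; omega
  · intro ℓ hℓ; simp only [mem_range] at hℓ; omega
  · intro i hi; simp only [mem_Icc] at hi; omega
  · intro ℓ hℓ; simp only [mem_range] at hℓ
    have h1 : thetaAux A n M ℓ = thetaAux A n ℓ ℓ := thetaAux_stable A n M ℓ (by omega)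
    have h2 : n - (n - ℓ) = ℓ := by omega
    rw [h1]; unfold thetaK'; rw [h2]

lemma thetaA_orth (A : ℕ → ℕ → ℝ) (k n : ℕ) (hk : k ≤ n) (ha : A k k ≠ 0) :
    ∑ j ∈ Icc k n, thetaK' A n j * A j k = if n = k then 1 else 0 := by
  rcases eq_or_lt_of_le hk with h | h
  · subst h; rw [if_pos rfl]
    rw [Finset.Icc_self, Finset.sum_singleton, thetaK'_diag]
    field_simp
  · rw [if_neg (by omega)]
    have hins : Icc k n = insert k (Icc (k+1) n) := by ext x; simp [mem_Icc]; omega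
    rw [hins, Finset.sum_insert (by simp [mem_Icc])]
    rw [thetaK'_rec A n k h]
    field_simp
    ring

lemma sum_Icc_swap (f : ℕ → ℕ → ℝ) (k n : ℕ) :
    ∑ j ∈ Icc k n, ∑ i ∈ Icc j n, f i j = ∑ i ∈ Icc k n, ∑ j ∈ Icc k i, f i j := by
  rw [Finset.sum_sigma', Finset.sum_sigma']
  refine Finset.sum_nbij' (i := fun p => ⟨p.2, p.1⟩) (j := fun p => ⟨p.2, p.1⟩)
    ?_ ?_ ?_ ?_ ?_
  · rintro ⟨j, i⟩ h; simp only [Finset.mem_sigma, mem_Icc] at *; omega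
  · rintro ⟨i, j⟩ h; simp only [Finset.mem_sigma, mem_Icc] at *; omega
  · rintro ⟨j, i⟩ h; rfl
  · rintro ⟨i, j⟩ h; rfl
  · rintro ⟨j, i⟩ h; rfl

lemma sum_ite_fin {N : ℕ} (p q : Fin N) (g : ℕ → ℝ) :
    (∑ r : Fin N, if (q:ℕ) ≤ (r:ℕ) ∧ (r:ℕ) ≤ (p:ℕ) then g ((r:ℕ)+1) else 0)
      = ∑ j ∈ Icc ((q:ℕ)+1) ((p:ℕ)+1), g j := by
  rw [Fin.sum_univ_eq_sum_range (fun r => if (q:ℕ) ≤ r ∧ r ≤ (p:ℕ) then g (r+1) else 0) N]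
  rw [← Finset.sum_filter]
  have hf : (range N).filter (fun r => (q:ℕ) ≤ r ∧ r ≤ (p:ℕ)) = Icc (q:ℕ) (p:ℕ) := by
    ext x; simp only [mem_filter, mem_range, mem_Icc]
    constructor
    · rintro ⟨_, h⟩; exact h
    · rintro ⟨h1, h2⟩; have := p.isLt; exact ⟨by omega, h1, h2⟩
  rw [hf]
  refine Finset.sum_nbij' (i := fun r => r + 1) (j := fun j => j - 1) ?_ ?_ ?_ ?_ ?_ <;>
    (intro x hx; simp only [mem_Icc] at *) <;> try omega

lemma Atheta_orth (A : ℕ → ℕ → ℝ) (N : ℕ) (ha : ∀ j, 1 ≤ j → j ≤ N → A j j ≠ 0)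
    (k i : ℕ) (hk : 1 ≤ k) (hki : k ≤ i) (hiN : i ≤ N) :
    ∑ j ∈ Icc k i, A i j * thetaK' A j k = if i = k then 1 else 0 := by
  have hN : 1 ≤ N := le_trans (le_trans hk hki) hiN
  set W : Matrix (Fin N) (Fin N) ℝ :=
    fun p q => if (q:ℕ) ≤ (p:ℕ) then thetaK' A ((p:ℕ)+1) ((q:ℕ)+1) else 0 with hW
  set Mm : Matrix (Fin N) (Fin N) ℝ :=
    fun p q => if (q:ℕ) ≤ (p:ℕ) then A ((p:ℕ)+1) ((q:ℕ)+1) else 0 with hM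
  have hWM : W * Mm = 1 := by
    ext p q
    rw [Matrix.mul_apply]
    have hconv : ∀ r : Fin N, W p r * Mm r q =
        (if (q:ℕ) ≤ (r:ℕ) ∧ (r:ℕ) ≤ (p:ℕ) then
          thetaK' A ((p:ℕ)+1) ((r:ℕ)+1) * A ((r:ℕ)+1) ((q:ℕ)+1) else 0) := by
      intro r; simp only [hW, hM, ite_mul, mul_ite, zero_mul, mul_zero]
      split_ifs <;> first | rfl | omega
    rw [Finset.sum_congr rfl (fun r _ => hconv r)]
    rw [sum_ite_fin p q (fun j => thetaK' A ((p:ℕ)+1) j * A j ((q:ℕ)+1))]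
    rcases le_or_gt (q:ℕ) (p:ℕ) with h | h
    · rw [thetaA_orth A ((q:ℕ)+1) ((p:ℕ)+1) (by omega)
        (ha ((q:ℕ)+1) (by omega) (by omega))]
      have : ((p:ℕ)+1 = (q:ℕ)+1) ↔ p = q := by
        constructor
        · intro hpq; exact Fin.ext (by omega)
        · intro hpq; rw [hpq]
      simp only [Matrix.one_apply]
      split_ifs with h1 h2 h2 <;> first | rfl | (exfalso; omega) |
        (exfalso; exact h2 (this.mp h1)) | (exfalso; exact h1 (this.mpr h2))
    · have hempty : Icc ((q:ℕ)+1) ((p:ℕ)+1) = ∅ := by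
        apply Finset.Icc_eq_empty; omega
      rw [hempty, Finset.sum_empty, Matrix.one_apply,
        if_neg (fun hpq => by subst hpq; omega)]
  have hMW : Mm * W = 1 := mul_eq_one_comm.mpr hWM
  have key := congrFun (congrFun hMW ⟨i - 1, by omega⟩) ⟨k - 1, by omega⟩
  rw [Matrix.mul_apply] at key
  have hconv : ∀ r : Fin N,
      Mm ⟨i-1, by omega⟩ r * W r ⟨k-1, by omega⟩ =
      (if (k-1 : ℕ) ≤ (r:ℕ) ∧ (r:ℕ) ≤ (i-1 : ℕ) then
        A ((i-1:ℕ)+1) ((r:ℕ)+1) * thetaK' A ((r:ℕ)+1) ((k-1:ℕ)+1) else 0) := by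
    intro r; simp only [hW, hM, ite_mul, mul_ite, zero_mul, mul_zero, Fin.val_mk]
    split_ifs <;> first | rfl | omega
  rw [Finset.sum_congr rfl (fun r _ => hconv r),
    sum_ite_fin (⟨i-1, by omega⟩ : Fin N) (⟨k-1, by omega⟩ : Fin N)
      (fun j => A ((i-1:ℕ)+1) j * thetaK' A j ((k-1:ℕ)+1))] at key
  have hi1 : (i-1:ℕ)+1 = i := by omega
  have hk1 : (k-1:ℕ)+1 = k := by omega
  rw [hi1, hk1] at key
  rw [key, Matrix.one_apply]
  have : (⟨i-1, by omega⟩ : Fin N) = ⟨k-1, by omega⟩ ↔ i = k := by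
    constructor
    · intro h; have := Fin.mk.injEq (i-1) (by omega : i-1 < N) (k-1) (by omega) ▸ h
      have : i - 1 = k - 1 := Fin.mk.inj_iff.mp h
      omega
    · intro h; subst h; rfl
  split_ifs with h1 h2 h2 <;> first | rfl | (exfalso; exact h2 (this.mp h1)) |
    (exfalso; exact h1 (this.mpr h2))

lemma thetaK_eq (α : ℝ) (t : ℕ → ℝ) (n k : ℕ) : thetaK α t n k = thetaK' (aK α t) n k := rfl

lemma q_telescope (α : ℝ) (t : ℕ → ℝ) (j : ℕ) :
    ∀ n, j ≤ n → qK α t n j = ∑ i ∈ Icc j n, aK α t i j := by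
  refine Nat.le_induction ?_ ?_
  · rw [Finset.Icc_self, Finset.sum_singleton, aK, if_pos rfl]
  · intro n hn ih
    rw [Finset.sum_Icc_succ_top (by omega), ← ih]
    have : aK α t (n+1) j = qK α t (n+1) j - qK α t n j := by
      rw [aK, if_neg (by omega)]; norm_num
    rw [this]; ring

-- qpos copied from s1

lemma qpos (α : ℝ) (hα0 : 0 < α) (N : ℕ) (t : ℕ → ℝ)
    (ht : ∀ k, k < N → t k < t (k + 1)) (k : ℕ) (hk1 : 1 ≤ k) (hkN : k ≤ N) :
    0 < qK α t k k := by
  obtain ⟨m, rfl⟩ : ∃ m, k = m + 1 := ⟨k - 1, by omega⟩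
  have hlt : t m < t (m + 1) := ht m (by omega)
  have hΓ : 0 < Real.Gamma α := Real.Gamma_pos_of_pos hα0
  have hint : IntervalIntegrable (fun s => omegaK α (t (m+1) - s)) MeasureTheory.volume
      (t m) (t (m+1)) := by
    have h1 : IntervalIntegrable (fun x : ℝ => x ^ (α - 1) / Real.Gamma α)
        MeasureTheory.volume (t (m+1) - t m) (t (m+1) - t (m+1)) := by
      apply IntervalIntegrable.div_const
      exact intervalIntegral.intervalIntegrable_rpow' (by linarith)
    have := h1.comp_sub_left (t (m+1))
    simpa [omegaK, sub_sub_cancel] using this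
  have heq : qK α t (m+1) (m+1) = ∫ s in (t m)..(t (m+1)), omegaK α (t (m+1) - s) := by
    simp [qK]
  rw [heq]
  apply intervalIntegral.intervalIntegral_pos_of_pos_on hint _ hlt
  intro x hx
  have h1 : 0 < t (m+1) - x := by simp at hx; linarith [hx.2]
  have := Real.rpow_pos_of_pos h1 (α - 1)
  exact div_pos this hΓ

theorem stmt11 (α : ℝ) (hα0 : 0 < α) (hα1 : α < 1)
    (N : ℕ) (t : ℕ → ℝ) (ht0 : t 0 = 0) (ht : ∀ k, k < N → t k < t (k + 1)) :
    ∀ n k, 1 ≤ k → k ≤ n → n ≤ N →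
      ∑ j ∈ Finset.Icc k n, qK α t n j * thetaK α t j k = 1 := by
  intro n k hk1 hkn hnN
  have ha : ∀ j, 1 ≤ j → j ≤ N → aK α t j j ≠ 0 := by
    intro j hj1 hjN
    rw [aK, if_pos rfl]
    exact ne_of_gt (qpos α hα0 N t ht j hj1 hjN)
  calc ∑ j ∈ Icc k n, qK α t n j * thetaK α t j k
      = ∑ j ∈ Icc k n, ∑ i ∈ Icc j n, aK α t i j * thetaK' (aK α t) j k := by
        apply Finset.sum_congr rfl
        intro j hj
        rw [mem_Icc] at hj
        rw [thetaK_eq, q_telescope α t j n (hj.2), Finset.sum_mul]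
    _ = ∑ i ∈ Icc k n, ∑ j ∈ Icc k i, aK α t i j * thetaK' (aK α t) j k :=
        sum_Icc_swap _ k n
    _ = ∑ i ∈ Icc k n, if i = k then (1:ℝ) else 0 := by
        apply Finset.sum_congr rfl
        intro i hi
        rw [mem_Icc] at hi
        exact Atheta_orth (aK α t) N ha k i hk1 hi.1 (le_trans hi.2 hnN)
    _ = 1 := by rw [Finset.sum_ite_eq' (Icc k n) k (fun _ => (1:ℝ))]; simp [mem_Icc, hk1, hkn]
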